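/- arXiv:1201.2803 — 2 statements merged into one kernel-verified Lean document; each statement's English description precedes it below -/
import Mathlib

section
/- Let C = {C_1,…,C_K} be a clustering of {1,…,n} and let A be an n×n stochastic matrix that has all diagonal entries positive, has inter-cluster common influence w.r.t. C, and has cluster-spanning-trees w.r.t. C. Then every right eigenvector of A for the eigenvalue 1 lies in the cluster-consensus subspace: if v ∈ ℝ^n satisfies A v = v, then v ∈ S_C. -/
open Finset Filter Topology Matrix

/-- An `n × n` real matrix is stochastic if all entries are nonnegative and
every row sums to `1`. -/
def IsStochastic {n : ℕ} (A : Matrix (Fin n) (Fin n) ℝ) : Prop :=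
  (∀ i j, 0 ≤ A i j) ∧ ∀ i, ∑ j, A i j = 1

/-- A clustering of `{1,…,n}`: pairwise disjoint subsets whose union is everything. -/
def IsClustering {n K : ℕ} (C : Fin K → Finset (Fin n)) : Prop :=
  (∀ p q, p ≠ q → Disjoint (C p) (C q)) ∧ ∀ i, ∃ p, i ∈ C p

/-- Reachability along directed edges of `G(A)`: edge from `j` to `i` iff `A i j > 0`. -/
def Reaches {n : ℕ} (A : Matrix (Fin n) (Fin n) ℝ) : Fin n → Fin n → Prop :=
  Relation.ReflTransGen fun j i => 0 < A i j

/-- `A` has cluster-spanning-trees w.r.t. `C`: for each cluster there is a vertex from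
which every vertex of the cluster is reachable in `G(A)`. -/
def HasClusterSpanningTrees {n K : ℕ} (C : Fin K → Finset (Fin n))
    (A : Matrix (Fin n) (Fin n) ℝ) : Prop :=
  ∀ p, ∃ v, ∀ i ∈ C p, Reaches A v i

/-- Inter-cluster common influence: `∑_{j ∈ C q} A i j` is the same for all `i ∈ C p`. -/
def InterClusterCommonInfluence {n K : ℕ} (C : Fin K → Finset (Fin n))
    (A : Matrix (Fin n) (Fin n) ℝ) : Prop :=
  ∀ p q, ∀ i ∈ C p, ∀ i' ∈ C p, ∑ j ∈ C q, A i j = ∑ j ∈ C q, A i' j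

/-- Cluster ergodicity coefficient
`μ_C(A) = min_p min_{i,j ∈ C p} ∑_k min (A i k) (A j k)`. -/
noncomputable def muC {n K : ℕ} (C : Fin K → Finset (Fin n))
    (A : Matrix (Fin n) (Fin n) ℝ) : ℝ :=
  sInf {s | ∃ p, ∃ i ∈ C p, ∃ j ∈ C p, s = ∑ k, min (A i k) (A j k)}

/-- Cluster Hajnal diameter `Δ_C(A) = max_p max_{i,j ∈ C p} max_k |A i k - A j k|`. -/
noncomputable def DeltaC {n K : ℕ} (C : Fin K → Finset (Fin n))
    (A : Matrix (Fin n) (Fin n) ℝ) : ℝ :=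
  sSup {d | ∃ p, ∃ i ∈ C p, ∃ j ∈ C p, ∃ k, d = |A i k - A j k|}

/-- The cluster-consensus subspace `S_C`. -/
def SC {n K : ℕ} (C : Fin K → Finset (Fin n)) : Set (Fin n → ℝ) :=
  {x | ∀ p, ∀ i ∈ C p, ∀ j ∈ C p, x i = x j}

/-- Left product `prodFrom A a m = A (a+m-1) * ⋯ * A (a+1) * A a` (with `m` factors). -/
def prodFrom {n : ℕ} (A : ℕ → Matrix (Fin n) (Fin n) ℝ) (a : ℕ) :
    ℕ → Matrix (Fin n) (Fin n) ℝ
  | 0 => 1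
  | m + 1 => A (a + m) * prodFrom A a m

lemma sum_partition {n K : ℕ} {C : Fin K → Finset (Fin n)} (hC : IsClustering C)
    (g : Fin n → ℝ) : ∑ k, g k = ∑ q, ∑ k ∈ C q, g k := by
  have hcover : (Finset.univ : Finset (Fin K)).biUnion C = Finset.univ := by
    apply Finset.eq_univ_of_forall
    intro k
    obtain ⟨p, hp⟩ := hC.2 k
    exact Finset.mem_biUnion.2 ⟨p, Finset.mem_univ p, hp⟩
  calc ∑ k, g k = ∑ k ∈ (Finset.univ : Finset (Fin K)).biUnion C, g k := by rw [hcover]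
    _ = ∑ q, ∑ k ∈ C q, g k := Finset.sum_biUnion (fun p _ q _ hpq => hC.1 p q hpq)

lemma aux_prop {n K : ℕ} {C : Fin K → Finset (Fin n)} (hC : IsClustering C)
    {A : Matrix (Fin n) (Fin n) ℝ} (hA : IsStochastic A)
    (hinfl : InterClusterCommonInfluence C A)
    {v : Fin n → ℝ} (hv : A.mulVec v = v) {Δ : ℝ}
    (hmax : ∀ p, ∀ a ∈ C p, ∀ b ∈ C p, v a - v b ≤ Δ)
    {i k : Fin n} (hik : 0 < A i k)
    (hi : ∃ p, i ∈ C p ∧ ∃ j ∈ C p, v i - v j = Δ) :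
    ∃ p, k ∈ C p ∧ ∃ j ∈ C p, v k - v j = Δ := by
  obtain ⟨p, hip, j, hjp, hΔ⟩ := hi
  set c : Fin K → ℝ := fun q => ∑ m ∈ C q, A i m with hc
  have hcj : ∀ q, ∑ m ∈ C q, A j m = c q := fun q => hinfl p q j hjp i hip
  set t : Fin K → ℝ :=
    fun q => (∑ m ∈ C q, A i m * v m) - ∑ m ∈ C q, A j m * v m with ht
  have hvi : ∀ x : Fin n, ∑ m, A x m * v m = v x := by
    intro x
    have := congrFun hv x
    simpa [Matrix.mulVec, dotProduct] using this
  have hsum_t : ∑ q, t q = Δ := by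
    rw [Finset.sum_sub_distrib]
    rw [← sum_partition hC (fun m => A i m * v m), ← sum_partition hC (fun m => A j m * v m)]
    rw [hvi i, hvi j, hΔ]
  have hctot : ∑ q, c q = 1 := by
    rw [hc]
    rw [← sum_partition hC (fun m => A i m)]
    exact hA.2 i
  have htle : ∀ q ∈ Finset.univ, t q ≤ c q * Δ := by
    intro q _
    by_cases hq : (C q).Nonempty
    · obtain ⟨b, hb, hbmax⟩ := Finset.exists_max_image (C q) v hq
      obtain ⟨b', hb', hbmin⟩ := Finset.exists_min_image (C q) v hq
      have hcnn : 0 ≤ c q := Finset.sum_nonneg fun m _ => hA.1 i m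
      have h1 : ∑ m ∈ C q, A i m * v m ≤ c q * v b := by
        rw [hc, Finset.sum_mul]
        exact Finset.sum_le_sum fun m hm =>
          mul_le_mul_of_nonneg_left (hbmax m hm) (hA.1 i m)
      have h2 : c q * v b' ≤ ∑ m ∈ C q, A j m * v m := by
        rw [← hcj q, Finset.sum_mul]
        exact Finset.sum_le_sum fun m hm =>
          mul_le_mul_of_nonneg_left (hbmin m hm) (hA.1 j m)
      have h3 : v b - v b' ≤ Δ := hmax q b hb b' hb'
      have ht' : t q = (∑ m ∈ C q, A i m * v m) - ∑ m ∈ C q, A j m * v m := rfl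
      nlinarith [h1, h2, h3, hcnn]
    · have hqe : C q = ∅ := Finset.not_nonempty_iff_eq_empty.mp hq
      simp [ht, hc, hqe]
  have heq : ∀ q ∈ Finset.univ, t q = c q * Δ := by
    rw [← Finset.sum_eq_sum_iff_of_le htle]
    rw [hsum_t, ← Finset.sum_mul, hctot, one_mul]
  obtain ⟨q0, hk0⟩ := hC.2 k
  have hq0 : (C q0).Nonempty := ⟨k, hk0⟩
  obtain ⟨b, hb, hbmax⟩ := Finset.exists_max_image (C q0) v hq0
  obtain ⟨b', hb', hbmin⟩ := Finset.exists_min_image (C q0) v hq0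
  have hc0pos : 0 < c q0 :=
    lt_of_lt_of_le hik (Finset.single_le_sum (fun m _ => hA.1 i m) hk0)
  have hteq : (∑ m ∈ C q0, A i m * v m) - (∑ m ∈ C q0, A j m * v m) = c q0 * Δ :=
    heq q0 (Finset.mem_univ q0)
  have h1 : ∑ m ∈ C q0, A i m * v m ≤ c q0 * v b := by
    rw [hc, Finset.sum_mul]
    exact Finset.sum_le_sum fun m hm =>
      mul_le_mul_of_nonneg_left (hbmax m hm) (hA.1 i m)
  have h2 : c q0 * v b' ≤ ∑ m ∈ C q0, A j m * v m := by
    rw [← hcj q0, Finset.sum_mul]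
    exact Finset.sum_le_sum fun m hm =>
      mul_le_mul_of_nonneg_left (hbmin m hm) (hA.1 j m)
  have h3 : v b - v b' ≤ Δ := hmax q0 b hb b' hb'
  have h5 : c q0 * Δ ≤ c q0 * (v b - v b') := by
    rw [mul_sub]; linarith
  have h6 : Δ ≤ v b - v b' := (mul_le_mul_iff_right₀ hc0pos).mp h5
  have h4 : v b - v b' = Δ := le_antisymm h3 h6
  have h8 : c q0 * v b - c q0 * v b' = c q0 * Δ := by rw [← mul_sub, h4]
  have h7 : ∑ m ∈ C q0, A i m * v m = c q0 * v b := by linarith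
  have h9 : ∑ m ∈ C q0, A i m * (v b - v m) = 0 := by
    have : ∑ m ∈ C q0, A i m * (v b - v m)
        = c q0 * v b - ∑ m ∈ C q0, A i m * v m := by
      rw [hc, Finset.sum_mul, ← Finset.sum_sub_distrib]
      exact Finset.sum_congr rfl fun m _ => by ring
    rw [this, h7, sub_self]
  have h10 : ∀ m ∈ C q0, 0 ≤ A i m * (v b - v m) := fun m hm =>
    mul_nonneg (hA.1 i m) (by linarith [hbmax m hm])
  have h11 : A i k * (v b - v k) = 0 :=
    (Finset.sum_eq_zero_iff_of_nonneg h10).mp h9 k hk0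
  have h12 : v k = v b := by
    rcases mul_eq_zero.mp h11 with h | h
    · exact absurd h (ne_of_gt hik)
    · linarith
  exact ⟨q0, hk0, b', hb', by rw [h12]; exact h4⟩

theorem stmt17 {n K : ℕ} (C : Fin K → Finset (Fin n)) (hC : IsClustering C)
    (A : Matrix (Fin n) (Fin n) ℝ) (hA : IsStochastic A)
    (hdiag : ∀ i, 0 < A i i)
    (hinfl : InterClusterCommonInfluence C A)
    (hspan : HasClusterSpanningTrees C A)
    (v : Fin n → ℝ) (hv : A.mulVec v = v) :
    v ∈ SC C := by
  have claim : ∀ p, ∀ a ∈ C p, ∀ b ∈ C p, v a - v b ≤ 0 := by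
    by_contra hcon
    push_neg at hcon
    obtain ⟨p0, a0, ha0, b0, hb0, hpos⟩ := hcon
    set s : Finset (Fin K × Fin n × Fin n) :=
      Finset.univ.filter (fun t => t.2.1 ∈ C t.1 ∧ t.2.2 ∈ C t.1) with hs
    have hsne : s.Nonempty := ⟨(p0, a0, b0), by simp [hs, ha0, hb0]⟩
    obtain ⟨t0, ht0mem, ht0max⟩ :=
      Finset.exists_max_image s (fun t => v t.2.1 - v t.2.2) hsne
    obtain ⟨pS, iS, jS⟩ := t0
    simp only [hs, Finset.mem_filter, Finset.mem_univ, true_and] at ht0mem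
    obtain ⟨hiS, hjS⟩ := ht0mem
    set Δ : ℝ := v iS - v jS with hΔdef
    have hmax : ∀ p, ∀ a ∈ C p, ∀ b ∈ C p, v a - v b ≤ Δ := by
      intro p a ha b hb
      exact ht0max (p, a, b) (by simp [hs, ha, hb])
    have hΔpos : 0 < Δ := lt_of_lt_of_le hpos (hmax p0 a0 ha0 b0 hb0)
    obtain ⟨r, hr⟩ := hspan pS
    have hTop : ∃ q, r ∈ C q ∧ ∃ y ∈ C q, v r - v y = Δ := by
      refine Relation.ReflTransGen.head_induction_on (hr iS hiS) ?_ ?_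
      · exact ⟨pS, hiS, jS, hjS, rfl⟩
      · intro a c hac _ hcP
        exact aux_prop hC hA hinfl hv hmax hac hcP
    have hv' : A.mulVec (-v) = -v := by rw [Matrix.mulVec_neg, hv]
    have hmax' : ∀ p, ∀ a ∈ C p, ∀ b ∈ C p, (-v) a - (-v) b ≤ Δ := by
      intro p a ha b hb
      have := hmax p b hb a ha
      simp only [Pi.neg_apply]
      linarith
    have hBot : ∃ q, r ∈ C q ∧ ∃ y ∈ C q, (-v) r - (-v) y = Δ := by
      refine Relation.ReflTransGen.head_induction_on (hr jS hjS) ?_ ?_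
      · refine ⟨pS, hjS, iS, hiS, ?_⟩
        simp only [Pi.neg_apply]
        linarith
      · intro a c hac _ hcP
        exact aux_prop hC hA hinfl hv' hmax' hac hcP
    obtain ⟨q1, hrq1, y1, hy1, hE1⟩ := hTop
    obtain ⟨q2, hrq2, y2, hy2, hE2⟩ := hBot
    have hq12 : q1 = q2 := by
      by_contra hne
      exact (Finset.disjoint_left.mp (hC.1 q1 q2 hne) hrq1) hrq2
    subst hq12
    simp only [Pi.neg_apply] at hE2
    have := hmax q1 y2 hy2 y1 hy1
    linarith
  intro p i hi j hj
  have h1 := claim p i hi j hj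
  have h2 := claim p j hj i hi
  linarith
end

section
/- Let C = {C_1,…,C_K} be a clustering of {1,…,n} and let A be an n×n stochastic matrix that has all diagonal entries positive, has inter-cluster common influence w.r.t. C, and has cluster-spanning-trees w.r.t. C. Then ℝ^n = S_C + W, where W = {v ∈ ℝ^n : lim_{t→∞} A^t v = 0}; that is, for every x ∈ ℝ^n there exists y ∈ S_C such that A^t (x − y) → 0 as t → ∞. -/
open Finset Filter Topology Matrix

section Basic
variable {n K : ℕ} {C : Fin K → Finset (Fin n)}

lemma sum_clusters (hC : IsClustering C) {M : Type*} [AddCommMonoid M] (f : Fin n → M) :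
    ∑ j, f j = ∑ p, ∑ j ∈ C p, f j := by
  rw [← Finset.sum_biUnion (fun p _ q _ hpq => hC.1 p q hpq)]
  apply Finset.sum_congr _ (fun _ _ => rfl)
  ext j
  simp only [Finset.mem_biUnion, Finset.mem_univ, true_and, true_iff]
  exact hC.2 j

lemma cluster_eq (hC : IsClustering C) {p q : Fin K} {i : Fin n}
    (hp : i ∈ C p) (hq : i ∈ C q) : p = q := by
  by_contra h
  exact Finset.disjoint_left.1 (hC.1 p q h) hp hq

variable {A B : Matrix (Fin n) (Fin n) ℝ}

lemma stoch_mul (hA : IsStochastic A) (hB : IsStochastic B) : IsStochastic (A * B) := by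
  constructor
  · intro i j
    rw [Matrix.mul_apply]
    exact Finset.sum_nonneg fun l _ => mul_nonneg (hA.1 i l) (hB.1 l j)
  · intro i
    simp only [Matrix.mul_apply]
    rw [Finset.sum_comm]
    calc ∑ l, ∑ j, A i l * B l j = ∑ l, A i l * ∑ j, B l j := by
          simp [Finset.mul_sum]
      _ = 1 := by simp [hB.2, hA.2 i]

lemma stoch_pow (hA : IsStochastic A) : ∀ t, IsStochastic (A ^ t)
  | 0 => by
      constructor
      · intro i j
        by_cases h : i = j <;> simp [Matrix.one_apply, h]
      · intro i; simp [Matrix.one_apply]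
  | (t+1) => by
      rw [pow_succ]
      exact stoch_mul (stoch_pow hA t) hA

lemma infl_one (hC : IsClustering C) :
    InterClusterCommonInfluence C (1 : Matrix (Fin n) (Fin n) ℝ) := by
  intro p q i hi i' hi'
  have h : ∀ j ∈ C p, (∑ l ∈ C q, (1 : Matrix (Fin n) (Fin n) ℝ) j l)
      = if p = q then 1 else 0 := by
    intro j hj
    simp only [Matrix.one_apply]
    rw [Finset.sum_ite_eq (C q) j (fun _ => (1:ℝ))]
    by_cases h : p = q
    · subst h; simp [hj]
    · simp only [h, if_false]
      rw [if_neg]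
      exact fun hjq => h (cluster_eq hC hj hjq)
  rw [h i hi, h i' hi']

lemma infl_mul (hC : IsClustering C) (hA : InterClusterCommonInfluence C A)
    (hB : InterClusterCommonInfluence C B) : InterClusterCommonInfluence C (A * B) := by
  intro p q i hi i' hi'
  have expand : ∀ z, ∑ j ∈ C q, (A * B) z j = ∑ r, ∑ l ∈ C r, A z l * (∑ j ∈ C q, B l j) := by
    intro z
    simp only [Matrix.mul_apply]
    rw [Finset.sum_comm]
    rw [sum_clusters hC (f := fun l => ∑ j ∈ C q, A z l * B l j)]
    simp [Finset.mul_sum]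
  rw [expand i, expand i']
  apply Finset.sum_congr rfl
  intro r _
  rcases (C r).eq_empty_or_nonempty with h | ⟨l₀, hl₀⟩
  · simp [h]
  · have hBv : ∀ l ∈ C r, (∑ j ∈ C q, B l j) = ∑ j ∈ C q, B l₀ j :=
      fun l hl => hB r q l hl l₀ hl₀
    calc ∑ l ∈ C r, A i l * (∑ j ∈ C q, B l j)
        = (∑ l ∈ C r, A i l) * (∑ j ∈ C q, B l₀ j) := by
          rw [Finset.sum_mul]
          exact Finset.sum_congr rfl fun l hl => by rw [hBv l hl]
      _ = (∑ l ∈ C r, A i' l) * (∑ j ∈ C q, B l₀ j) := by rw [hA p r i hi i' hi']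
      _ = ∑ l ∈ C r, A i' l * (∑ j ∈ C q, B l j) := by
          rw [Finset.sum_mul]
          exact (Finset.sum_congr rfl fun l hl => by rw [hBv l hl]).symm

lemma infl_pow (hC : IsClustering C) (hA : InterClusterCommonInfluence C A) :
    ∀ t, InterClusterCommonInfluence C (A ^ t)
  | 0 => by rw [pow_zero]; exact infl_one hC
  | (t+1) => by rw [pow_succ]; exact infl_mul hC (infl_pow hC hA t) hA

end Basic

section Hajnal
variable {n K : ℕ} {C : Fin K → Finset (Fin n)} {M N : Matrix (Fin n) (Fin n) ℝ}

lemma hajnal_one_sided (hC : IsClustering C) (hM : IsStochastic M)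
    (hMinfl : InterClusterCommonInfluence C M) {μ ε : ℝ} (hε : 0 ≤ ε)
    (hμ : ∀ p, ∀ i ∈ C p, ∀ j ∈ C p, μ ≤ ∑ k, min (M i k) (M j k))
    (hN : ∀ p, ∀ i ∈ C p, ∀ j ∈ C p, ∀ k, |N i k - N j k| ≤ ε)
    {p : Fin K} {i j : Fin n} (hi : i ∈ C p) (hj : j ∈ C p) (k : Fin n) :
    (M * N) i k - (M * N) j k ≤ (1 - μ) * ε := by
  set a : Fin n → ℝ := fun l => M i l - min (M i l) (M j l) with ha
  set b : Fin n → ℝ := fun l => M j l - min (M i l) (M j l) with hb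
  have ha0 : ∀ l, 0 ≤ a l := fun l => by simp [ha]
  have hb0 : ∀ l, 0 ≤ b l := fun l => by simp [hb]
  have habsum : ∀ r, ∑ l ∈ C r, a l = ∑ l ∈ C r, b l := by
    intro r
    simp only [ha, hb, Finset.sum_sub_distrib]
    rw [hMinfl p r i hi j hj]
  -- cluster-wise bound
  have key : ∀ r, ∑ l ∈ C r, a l * N l k - ∑ l ∈ C r, b l * N l k
      ≤ (∑ l ∈ C r, a l) * ε := by
    intro r
    rcases (C r).eq_empty_or_nonempty with h | hne
    · simp [h]
    · obtain ⟨lx, hlx, hmax⟩ := Finset.exists_max_image (C r) (fun l => N l k) hne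
      obtain ⟨ln, hln, hmin⟩ := Finset.exists_min_image (C r) (fun l => N l k) hne
      have h1 : ∑ l ∈ C r, a l * N l k ≤ (∑ l ∈ C r, a l) * N lx k := by
        rw [Finset.sum_mul]
        exact Finset.sum_le_sum (fun l hl => mul_le_mul_of_nonneg_left (hmax l hl) (ha0 l))
      have h2 : (∑ l ∈ C r, b l) * N ln k ≤ ∑ l ∈ C r, b l * N l k := by
        rw [Finset.sum_mul]
        exact Finset.sum_le_sum (fun l hl => mul_le_mul_of_nonneg_left (hmin l hl) (hb0 l))
      have hc0 : 0 ≤ ∑ l ∈ C r, a l := Finset.sum_nonneg fun l _ => ha0 l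
      have hd : N lx k - N ln k ≤ ε :=
        (le_abs_self _).trans (hN r lx hlx ln hln k)
      calc ∑ l ∈ C r, a l * N l k - ∑ l ∈ C r, b l * N l k
          ≤ (∑ l ∈ C r, a l) * N lx k - (∑ l ∈ C r, b l) * N ln k := by
            exact sub_le_sub h1 h2
        _ = (∑ l ∈ C r, a l) * (N lx k - N ln k) := by
            rw [habsum r]; ring
        _ ≤ (∑ l ∈ C r, a l) * ε := mul_le_mul_of_nonneg_left hd hc0
  have expand : (M * N) i k - (M * N) j k
      = ∑ r, (∑ l ∈ C r, a l * N l k - ∑ l ∈ C r, b l * N l k) := by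
    simp only [Matrix.mul_apply, ← Finset.sum_sub_distrib]
    rw [← sum_clusters hC (f := fun l => a l * N l k - b l * N l k)]
    apply Finset.sum_congr rfl; intro l _; simp only [ha, hb]; ring
  rw [expand]
  calc ∑ r, (∑ l ∈ C r, a l * N l k - ∑ l ∈ C r, b l * N l k)
      ≤ ∑ r, (∑ l ∈ C r, a l) * ε := Finset.sum_le_sum fun r _ => key r
    _ = (∑ l, a l) * ε := by rw [← Finset.sum_mul, ← sum_clusters hC]
    _ ≤ (1 - μ) * ε := by
        apply mul_le_mul_of_nonneg_right _ hε
        have : ∑ l, a l = 1 - ∑ l, min (M i l) (M j l) := by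
          simp only [ha, Finset.sum_sub_distrib, hM.2 i]
        rw [this]
        have := hμ p i hi j hj
        linarith

lemma hajnal (hC : IsClustering C) (hM : IsStochastic M)
    (hMinfl : InterClusterCommonInfluence C M) {μ ε : ℝ} (hε : 0 ≤ ε)
    (hμ : ∀ p, ∀ i ∈ C p, ∀ j ∈ C p, μ ≤ ∑ k, min (M i k) (M j k))
    (hN : ∀ p, ∀ i ∈ C p, ∀ j ∈ C p, ∀ k, |N i k - N j k| ≤ ε) :
    ∀ p, ∀ i ∈ C p, ∀ j ∈ C p, ∀ k, |(M * N) i k - (M * N) j k| ≤ (1 - μ) * ε := by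
  intro p i hi j hj k
  rw [abs_sub_le_iff]
  have hμ' : ∀ p, ∀ i ∈ C p, ∀ j ∈ C p, μ ≤ ∑ k, min (M i k) (M j k) := by
    intro p i hi j hj
    have := hμ p j hj i hi
    simpa [min_comm] using this
  exact ⟨hajnal_one_sided hC hM hMinfl hε hμ hN hi hj k,
    hajnal_one_sided hC hM hMinfl hε hμ' hN hj hi k⟩

end Hajnal

section Scramble
variable {n K : ℕ} {C : Fin K → Finset (Fin n)} {A : Matrix (Fin n) (Fin n) ℝ}

lemma diag_pow_pos (hA : IsStochastic A) (hdiag : ∀ i, 0 < A i i) (v : Fin n) :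
    ∀ t, 0 < (A ^ t) v v
  | 0 => by simp [Matrix.one_apply]
  | (t+1) => by
      rw [pow_succ']
      rw [Matrix.mul_apply]
      have hterm : 0 < A v v * (A ^ t) v v :=
        mul_pos (hdiag v) (diag_pow_pos hA hdiag v t)
      have : ∀ l ∈ (univ : Finset (Fin n)), 0 ≤ A v l * (A ^ t) l v :=
        fun l _ => mul_nonneg (hA.1 v l) ((stoch_pow hA t).1 l v)
      calc (0:ℝ) < A v v * (A ^ t) v v := hterm
        _ ≤ ∑ l, A v l * (A ^ t) l v := Finset.single_le_sum this (Finset.mem_univ v)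

lemma reach_pow_pos (hA : IsStochastic A) (hdiag : ∀ i, 0 < A i i) {v i : Fin n}
    (h : Reaches A v i) : ∃ s, ∀ t ≥ s, 0 < (A ^ t) i v := by
  induction h with
  | refl => exact ⟨0, fun t _ => diag_pow_pos hA hdiag v t⟩
  | @tail b c hvb hbc ih =>
      obtain ⟨s, hs⟩ := ih
      refine ⟨s + 1, fun t ht => ?_⟩
      obtain ⟨u, rfl⟩ : ∃ u, t = u + 1 := ⟨t - 1, by omega⟩
      rw [pow_succ']
      rw [Matrix.mul_apply]
      have hterm : 0 < A c b * (A ^ u) b v := mul_pos hbc (hs u (by omega))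
      have : ∀ l ∈ (univ : Finset (Fin n)), 0 ≤ A c l * (A ^ u) l v :=
        fun l _ => mul_nonneg (hA.1 c l) ((stoch_pow hA u).1 l v)
      calc (0:ℝ) < A c b * (A ^ u) b v := hterm
        _ ≤ ∑ l, A c l * (A ^ u) l v := Finset.single_le_sum this (Finset.mem_univ b)

lemma scramble (hC : IsClustering C) (hA : IsStochastic A) (hdiag : ∀ i, 0 < A i i)
    (hspan : HasClusterSpanningTrees C A) :
    ∃ m, 1 ≤ m ∧ ∃ μ : ℝ, 0 < μ ∧ μ ≤ 1 ∧
      ∀ p, ∀ i ∈ C p, ∀ j ∈ C p, μ ≤ ∑ k, min ((A ^ m) i k) ((A ^ m) j k) := by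
  classical
  -- roots
  choose v hv using hspan
  -- waiting times
  have hs : ∀ p i, ∃ s, ∀ t ≥ s, i ∈ C p → 0 < (A ^ t) i (v p) := by
    intro p i
    by_cases h : i ∈ C p
    · obtain ⟨s, hs⟩ := reach_pow_pos hA hdiag (hv p i h)
      exact ⟨s, fun t ht _ => hs t ht⟩
    · exact ⟨0, fun t _ hi => absurd hi h⟩
  choose s hsspec using hs
  set m : ℕ := 1 + Finset.sup univ (fun pr : Fin K × Fin n => s pr.1 pr.2) with hm
  have hm1 : 1 ≤ m := by omega
  have hpos : ∀ p, ∀ i ∈ C p, 0 < (A ^ m) i (v p) := by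
    intro p i hi
    apply hsspec p i m _ hi
    have : s p i ≤ Finset.sup univ (fun pr : Fin K × Fin n => s pr.1 pr.2) :=
      Finset.le_sup (f := fun pr : Fin K × Fin n => s pr.1 pr.2) (Finset.mem_univ (p, i))
    omega
  -- uniform positive lower bound
  set g : Fin K × Fin n × Fin n → ℝ :=
    fun t => ∑ k, min ((A ^ m) t.2.1 k) ((A ^ m) t.2.2 k) with hg
  set F : Finset (Fin K × Fin n × Fin n) :=
    univ.filter (fun t => t.2.1 ∈ C t.1 ∧ t.2.2 ∈ C t.1) with hF
  have hgpos : ∀ t ∈ F, 0 < g t := by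
    intro t ht
    simp only [hF, Finset.mem_filter] at ht
    obtain ⟨-, h1, h2⟩ := ht
    have hterm : 0 < min ((A ^ m) t.2.1 (v t.1)) ((A ^ m) t.2.2 (v t.1)) :=
      lt_min (hpos t.1 t.2.1 h1) (hpos t.1 t.2.2 h2)
    have hnn : ∀ k ∈ (univ : Finset (Fin n)), 0 ≤ min ((A ^ m) t.2.1 k) ((A ^ m) t.2.2 k) :=
      fun k _ => le_min ((stoch_pow hA m).1 t.2.1 k) ((stoch_pow hA m).1 t.2.2 k)
    exact lt_of_lt_of_le hterm (Finset.single_le_sum hnn (Finset.mem_univ (v t.1)))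
  set T : Finset ℝ := insert 1 (F.image g) with hT
  have hTne : T.Nonempty := ⟨1, Finset.mem_insert_self _ _⟩
  refine ⟨m, hm1, T.min' hTne, ?_, ?_, ?_⟩
  · apply (Finset.lt_min'_iff T hTne).2
    intro b hb
    rw [hT] at hb
    rcases Finset.mem_insert.1 hb with h | h
    · rw [h]; norm_num
    · obtain ⟨t, ht, hgt⟩ := Finset.mem_image.1 h
      rw [← hgt]; exact hgpos t ht
  · exact Finset.min'_le T 1 (Finset.mem_insert_self _ _)
  · intro p i hi j hj
    apply Finset.min'_le
    rw [hT]
    apply Finset.mem_insert_of_mem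
    exact Finset.mem_image.2 ⟨(p, i, j), by simp [hF, hi, hj], rfl⟩

lemma decay (hC : IsClustering C) (hA : IsStochastic A) (hdiag : ∀ i, 0 < A i i)
    (hinfl : InterClusterCommonInfluence C A) (hspan : HasClusterSpanningTrees C A) :
    ∀ p, ∀ i ∈ C p, ∀ j ∈ C p, ∀ k,
      Tendsto (fun T : ℕ => (A ^ T) i k - (A ^ T) j k) atTop (𝓝 0) := by
  obtain ⟨m, hm1, μ, hμ0, hμ1, hμ⟩ := scramble hC hA hdiag hspan
  set P : ℕ → ℝ → Prop :=
    fun t ε => ∀ p, ∀ i ∈ C p, ∀ j ∈ C p, ∀ k, |(A ^ t) i k - (A ^ t) j k| ≤ ε with hP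
  have base : ∀ t, P t 1 := by
    intro t p i hi j hj k
    have h1 : (A ^ t) i k ≤ 1 := by
      rw [← (stoch_pow hA t).2 i]
      exact Finset.single_le_sum (fun l _ => (stoch_pow hA t).1 i l) (Finset.mem_univ k)
    have h2 : (A ^ t) j k ≤ 1 := by
      rw [← (stoch_pow hA t).2 j]
      exact Finset.single_le_sum (fun l _ => (stoch_pow hA t).1 j l) (Finset.mem_univ k)
    have h3 : 0 ≤ (A ^ t) i k := (stoch_pow hA t).1 i k
    have h4 : 0 ≤ (A ^ t) j k := (stoch_pow hA t).1 j k
    rw [abs_sub_le_iff]; constructor <;> linarith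
  have step1 : ∀ t ε, 0 ≤ ε → P t ε → P (t + 1) ε := by
    intro t ε hε h
    have h0 : ∀ p, ∀ i ∈ C p, ∀ j ∈ C p, (0:ℝ) ≤ ∑ k, min (A i k) (A j k) :=
      fun p i _ j _ => Finset.sum_nonneg fun k _ => le_min (hA.1 i k) (hA.1 j k)
    have := hajnal hC hA hinfl hε h0 h
    intro p i hi j hj k
    have h2 := this p i hi j hj k
    rw [pow_succ']
    simpa using h2
  have stepm : ∀ t ε, 0 ≤ ε → P t ε → P (m + t) ((1 - μ) * ε) := by
    intro t ε hε h
    have := hajnal hC (stoch_pow hA m) (infl_pow hC hinfl m) hε hμ h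
    intro p i hi j hj k
    have h2 := this p i hi j hj k
    rw [pow_add]
    exact h2
  have hmul : ∀ u, P (u * m) ((1 - μ) ^ u) := by
    intro u
    induction u with
    | zero => simpa using base 0
    | succ u ih =>
        have h := stepm (u * m) ((1 - μ) ^ u) (pow_nonneg (by linarith) u) ih
        have he : (u + 1) * m = m + u * m := by ring
        have he2 : (1 - μ) ^ (u + 1) = (1 - μ) * (1 - μ) ^ u := by ring
        rw [he, he2]
        exact h
  have hall : ∀ u r, P (u * m + r) ((1 - μ) ^ u) := by
    intro u r
    induction r with
    | zero => simpa using hmul u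
    | succ r ih => exact step1 _ _ (pow_nonneg (by linarith) u) ih
  have hfin : ∀ T, P T ((1 - μ) ^ (T / m)) := by
    intro T
    have := hall (T / m) (T % m)
    rwa [Nat.div_add_mod'] at this
  intro p i hi j hj k
  apply squeeze_zero_norm (fun T => hfin T p i hi j hj k)
  have h1 : Tendsto (fun u : ℕ => (1 - μ) ^ u) atTop (𝓝 0) :=
    tendsto_pow_atTop_nhds_zero_of_lt_one (by linarith) (by linarith)
  have h2 : Tendsto (fun T : ℕ => T / m) atTop atTop := by
    apply tendsto_atTop_atTop.2
    intro b
    refine ⟨b * m, fun T hT => ?_⟩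
    exact (Nat.le_div_iff_mul_le (by omega)).2 hT
  exact h1.comp h2

end Scramble

section Spectral
variable {n K : ℕ} (C : Fin K → Finset (Fin n))

/-- complex cluster-consensus submodule -/
noncomputable def SCc : Submodule ℂ (Fin n → ℂ) where
  carrier := {v | ∀ p, ∀ i ∈ C p, ∀ j ∈ C p, v i = v j}
  add_mem' := fun hu hv p i hi j hj => by
    simp only [Pi.add_apply]; rw [hu p i hi j hj, hv p i hi j hj]
  zero_mem' := fun p i hi j hj => rfl
  smul_mem' := fun c v hv p i hi j hj => by
    simp only [Pi.smul_apply]; rw [hv p i hi j hj]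

/-- vanishing submodule -/
noncomputable def Wc (Bc : Matrix (Fin n) (Fin n) ℂ) : Submodule ℂ (Fin n → ℂ) where
  carrier := {v | Tendsto (fun t : ℕ => (Bc ^ t).mulVec v) atTop (𝓝 0)}
  add_mem' := fun {u v} hu hv => by
    have := hu.add hv
    simpa [Matrix.mulVec_add] using this
  zero_mem' := by simpa [Matrix.mulVec_zero] using tendsto_const_nhds
  smul_mem' := fun c v hv => by
    have := hv.const_smul c
    simpa [Matrix.mulVec_smul] using this

theorem main_complex {C : Fin K → Finset (Fin n)} (hn : 0 < n) (hC : IsClustering C)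
    {A : Matrix (Fin n) (Fin n) ℝ} (hA : IsStochastic A) (hdiag : ∀ i, 0 < A i i)
    (hinfl : InterClusterCommonInfluence C A) (hspan : HasClusterSpanningTrees C A) :
    ∀ x : Fin n → ℝ, ∃ y ∈ SC C,
      Tendsto (fun t : ℕ => (A ^ t).mulVec (x - y)) atTop (𝓝 0) := by
  classical
  set Bc : Matrix (Fin n) (Fin n) ℂ := (algebraMap ℝ ℂ).mapMatrix A with hBc
  have hBpow : ∀ t, Bc ^ t = (algebraMap ℝ ℂ).mapMatrix (A ^ t) := by
    intro t; rw [hBc, ← map_pow]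
  have hBent : ∀ t i j, (Bc ^ t) i j = ((A ^ t) i j : ℂ) := by
    intro t i j
    rw [hBpow t]
    rfl
  set S' : Submodule ℂ (Fin n → ℂ) := SCc C with hS'
  set W' : Submodule ℂ (Fin n → ℂ) := Wc Bc with hW'
  set f : Module.End ℂ (Fin n → ℂ) := Matrix.mulVecLin Bc with hf
  have hfpow : ∀ t (v : Fin n → ℂ), (f ^ t) v = (Bc ^ t).mulVec v := by
    intro t
    induction t with
    | zero => intro v; simp [Matrix.one_mulVec]
    | succ t ih =>
        intro v
        rw [pow_succ, Module.End.mul_apply, hf]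
        rw [Matrix.mulVecLin_apply]
        rw [ih (Bc.mulVec v), Matrix.mulVec_mulVec, ← pow_succ]
  -- decay over ℂ
  have decayC : ∀ (v : Fin n → ℂ) p, ∀ i ∈ C p, ∀ j ∈ C p,
      Tendsto (fun t : ℕ => ((Bc ^ t).mulVec v) i - ((Bc ^ t).mulVec v) j)
        atTop (𝓝 0) := by
    intro v p i hi j hj
    have heq : ∀ t : ℕ, ((Bc ^ t).mulVec v) i - ((Bc ^ t).mulVec v) j
        = ∑ k, ((((A ^ t) i k - (A ^ t) j k : ℝ)) : ℂ) * v k := by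
      intro t
      simp only [Matrix.mulVec, dotProduct, hBent]
      rw [← Finset.sum_sub_distrib]
      apply Finset.sum_congr rfl
      intro k _
      push_cast
      ring
    simp only [heq]
    have : Tendsto (fun t : ℕ => ∑ k, ((((A ^ t) i k - (A ^ t) j k : ℝ)) : ℂ) * v k)
        atTop (𝓝 (∑ k : Fin n, 0)) := by
      apply tendsto_finset_sum
      intro k _
      have h1 := decay hC hA hdiag hinfl hspan p i hi j hj k
      have h2 : Tendsto (fun t : ℕ => (((A ^ t) i k - (A ^ t) j k : ℝ) : ℂ)) atTop (𝓝 0) := by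
        have := (Complex.continuous_ofReal.tendsto 0).comp h1
        simp only [Function.comp_def] at this
        simpa using this
      simpa using h2.mul_const (v k)
    simpa using this
  -- cluster representatives
  set cl : Fin n → Fin K := fun i => (hC.2 i).choose with hcl'
  have hcl : ∀ i, i ∈ C (cl i) := fun i => (hC.2 i).choose_spec
  set rep : Fin K → Fin n := fun p => if h : (C p).Nonempty then h.choose else ⟨0, hn⟩ with hrep'
  have hrep : ∀ p (h : (C p).Nonempty), rep p ∈ C p := by
    intro p h
    simp only [hrep', dif_pos h]
    exact h.choose_spec
  -- projection
  obtain ⟨U, hU⟩ := Submodule.exists_isCompl S'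
  set π : (Fin n → ℂ) →ₗ[ℂ] (Fin n → ℂ) :=
    U.subtype.comp (Submodule.linearProjOfIsCompl U S' hU.symm) with hπ'
  have hker : ∀ w, π w = 0 ↔ w ∈ S' := by
    intro w
    rw [hπ', LinearMap.comp_apply]
    rw [show (U.subtype (Submodule.linearProjOfIsCompl U S' hU.symm w) = 0)
      ↔ Submodule.linearProjOfIsCompl U S' hU.symm w = 0 from by
        simp [Submodule.coe_eq_zero]]
    exact Submodule.linearProjOfIsCompl_apply_eq_zero_iff hU.symm
  have hππ : ∀ w, π (π w) = π w := by
    intro w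
    have hmem : π w ∈ U := (Submodule.linearProjOfIsCompl U S' hU.symm w).2
    rw [hπ', LinearMap.comp_apply]
    rw [show Submodule.linearProjOfIsCompl U S' hU.symm (π w) = ⟨π w, hmem⟩ from
      Submodule.linearProjOfIsCompl_apply_left hU.symm ⟨π w, hmem⟩]
    rfl
  have hsub : ∀ w, w - π w ∈ S' := by
    intro w
    rw [← hker]
    rw [map_sub, hππ, sub_self]
  -- S' invariant under f
  have hfS : ∀ s ∈ S', f s ∈ S' := by
    intro s hs p i hi j hj
    have hexp : ∀ z, (Bc.mulVec s) z = ∑ r, ∑ l ∈ C r, ((A z l : ℂ)) * s l := by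
      intro z
      simp only [Matrix.mulVec, dotProduct]
      rw [sum_clusters hC (f := fun l => Bc z l * s l)]
      apply Finset.sum_congr rfl; intro r _
      apply Finset.sum_congr rfl; intro l _
      rw [hBc]
      rfl
    show (Bc.mulVec s) i = (Bc.mulVec s) j
    rw [hexp i, hexp j]
    apply Finset.sum_congr rfl
    intro r _
    rcases (C r).eq_empty_or_nonempty with h | ⟨l₀, hl₀⟩
    · simp [h]
    · have hsv : ∀ l ∈ C r, s l = s l₀ := fun l hl => hs r l hl l₀ hl₀
      have hcast : ∀ z : Fin n, (∑ l ∈ C r, ((A z l : ℂ))) = ((∑ l ∈ C r, A z l : ℝ) : ℂ) := by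
        intro z; push_cast; rfl
      calc ∑ l ∈ C r, ((A i l : ℂ)) * s l = (∑ l ∈ C r, ((A i l : ℂ))) * s l₀ := by
            rw [Finset.sum_mul]
            exact Finset.sum_congr rfl fun l hl => by rw [hsv l hl]
        _ = (∑ l ∈ C r, ((A j l : ℂ))) * s l₀ := by
            rw [hcast i, hcast j, hinfl p r i hi j hj]
        _ = ∑ l ∈ C r, ((A j l : ℂ)) * s l := by
            rw [Finset.sum_mul]
            exact (Finset.sum_congr rfl fun l hl => by rw [hsv l hl]).symm
  set g : Module.End ℂ (Fin n → ℂ) := π.comp f with hg'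
  have hπf : ∀ v, π (f v) = g (π v) := by
    intro v
    rw [hg', LinearMap.comp_apply]
    have : f v - f (π v) ∈ S' := by
      rw [← map_sub]
      exact hfS _ (hsub v)
    have h0 : π (f v - f (π v)) = 0 := (hker _).2 this
    rw [map_sub] at h0
    exact sub_eq_zero.1 h0
  have hπft : ∀ (t : ℕ) v, π ((f ^ t) v) = (g ^ t) (π v) := by
    intro t
    induction t with
    | zero => intro v; simp
    | succ t ih =>
        intro v
        rw [pow_succ, Module.End.mul_apply, pow_succ, Module.End.mul_apply, ih (f v), hπf v]
  have hπcont : Continuous π := π.continuous_of_finiteDimensional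
  -- pointwise convergence of g-iterates on range of π
  have hg0 : ∀ v : Fin n → ℂ, Tendsto (fun t : ℕ => (g ^ t) (π v)) atTop (𝓝 0) := by
    intro v
    have heq : ∀ t : ℕ, (g ^ t) (π v) = π ((Bc ^ t).mulVec v) := by
      intro t
      rw [← hπft t v, hfpow t v]
    simp only [heq]
    set w : ℕ → (Fin n → ℂ) := fun t => (Bc ^ t).mulVec v with hw
    set st : ℕ → (Fin n → ℂ) := fun t => fun i => w t (rep (cl i)) with hst
    have hstS : ∀ t, st t ∈ S' := by
      intro t p i hi j hj
      have h1 : cl i = p := cluster_eq hC (hcl i) hi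
      have h2 : cl j = p := cluster_eq hC (hcl j) hj
      simp only [hst]
      rw [h1, h2]
    have hdiff : Tendsto (fun t => w t - st t) atTop (𝓝 0) := by
      rw [tendsto_pi_nhds]
      intro i
      have hne : (C (cl i)).Nonempty := ⟨i, hcl i⟩
      have := decayC v (cl i) i (hcl i) (rep (cl i)) (hrep _ hne)
      simpa [hst, hw] using this
    have hπw : ∀ t, π (w t) = π (w t - st t) := by
      intro t
      rw [map_sub, (hker (st t)).2 (hstS t), sub_zero]
    show Tendsto (fun t => π (w t)) atTop (𝓝 0)
    simp only [hπw]
    have := (hπcont.tendsto 0).comp hdiff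
    simpa [Function.comp_def] using this
  -- each generalized eigenspace is contained in S' ⊔ W'
  have heig : ∀ lam : ℂ, f.maxGenEigenspace lam ≤ S' ⊔ W' := by
    intro lam v hv
    rw [Module.End.mem_maxGenEigenspace] at hv
    obtain ⟨k, hk⟩ := hv
    by_cases hlam : 1 ≤ ‖lam‖
    · -- v ∈ S'
      have hinj : ∀ u, (g - lam • 1) u = 0 → u = 0 := by
        intro u hu
        have hgu : g u = lam • u := by
          have : g u - lam • u = 0 := by
            simpa [LinearMap.sub_apply, LinearMap.smul_apply] using hu
          exact sub_eq_zero.1 this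
        have hlam0 : lam ≠ 0 := by
          intro h; rw [h] at hlam; simp at hlam; linarith
        have huπ : u = π (lam⁻¹ • f u) := by
          have : g u = π (f u) := rfl
          rw [_root_.map_smul, ← this, hgu]
          rw [smul_smul, inv_mul_cancel₀ hlam0, one_smul]
        have hit : ∀ t : ℕ, (g ^ t) u = lam ^ t • u := by
          intro t
          induction t with
          | zero => simp
          | succ t ih =>
              rw [pow_succ', Module.End.mul_apply, ih, _root_.map_smul, hgu, smul_smul, ← pow_succ]
        have htend : Tendsto (fun t : ℕ => (g ^ t) u) atTop (𝓝 0) := by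
          rw [huπ]
          exact hg0 _
        have hnorm : ∀ t : ℕ, ‖u‖ ≤ ‖(g ^ t) u‖ := by
          intro t
          have h1 : (1:ℝ) ≤ ‖lam‖ ^ t := one_le_pow₀ hlam
          calc ‖u‖ = 1 * ‖u‖ := (one_mul _).symm
            _ ≤ ‖lam‖ ^ t * ‖u‖ := mul_le_mul_of_nonneg_right h1 (norm_nonneg u)
            _ = ‖(g ^ t) u‖ := by rw [hit t, norm_smul, norm_pow]
        have hlim : Tendsto (fun t : ℕ => ‖(g ^ t) u‖) atTop (𝓝 0) := by
          have := (continuous_norm.tendsto 0).comp htend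
          simpa [Function.comp_def] using this
        have : ‖u‖ ≤ 0 := ge_of_tendsto' hlim hnorm
        exact norm_le_zero_iff.1 this
      have hcommk : ∀ (k : ℕ) w, π (((f - lam • 1) ^ k) w) = ((g - lam • 1) ^ k) (π w) := by
        intro k
        induction k with
        | zero => intro w; simp
        | succ k ih =>
            intro w
            rw [pow_succ, Module.End.mul_apply, pow_succ, Module.End.mul_apply]
            rw [ih ((f - lam • 1) w)]
            congr 1
            rw [LinearMap.sub_apply, LinearMap.smul_apply, Module.End.one_apply,
              map_sub, _root_.map_smul, hπf]
            simp [LinearMap.sub_apply, LinearMap.smul_apply]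
      have hinjk : ∀ (k : ℕ) u, ((g - lam • 1) ^ k) u = 0 → u = 0 := by
        intro k
        induction k with
        | zero => intro u hu; simpa using hu
        | succ k ih =>
            intro u hu
            rw [pow_succ, Module.End.mul_apply] at hu
            exact hinj u (ih _ hu)
      have hπv0 : π v = 0 := by
        apply hinjk k
        rw [← hcommk k v, hk, map_zero]
      have hvS : v ∈ S' := (hker v).1 hπv0
      exact Submodule.mem_sup_left hvS
    · -- ‖lam‖ < 1 : v ∈ W'
      push_neg at hlam
      apply Submodule.mem_sup_right
      show Tendsto (fun t : ℕ => (Bc ^ t).mulVec v) atTop (𝓝 0)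
      have hfv : Tendsto (fun t : ℕ => (f ^ t) v) atTop (𝓝 0) := by
        by_cases hlam0 : lam = 0
        · -- nilpotent case
          have hfk : (f ^ k) v = 0 := by
            have : f - lam • 1 = f := by rw [hlam0, zero_smul, sub_zero]
            rwa [this] at hk
          apply tendsto_atTop_of_eventually_const (i₀ := k)
          intro t ht
          obtain ⟨u, rfl⟩ : ∃ u, t = u + k := ⟨t - k, by omega⟩
          rw [pow_add, Module.End.mul_apply, hfk, map_zero]
        · set N : Module.End ℂ (Fin n → ℂ) := f - lam • 1 with hN
          have hNk : ∀ j, k ≤ j → (N ^ j) v = 0 := by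
            intro j hj
            obtain ⟨u, rfl⟩ : ∃ u, j = u + k := ⟨j - k, by omega⟩
            rw [pow_add, Module.End.mul_apply, hk, map_zero]
          have hcomm : Commute N (lam • (1 : Module.End ℂ (Fin n → ℂ))) :=
            (Commute.one_right N).smul_right lam
          have hbin : ∀ t, (f ^ t) v
              = ∑ j ∈ Finset.range (t + 1), ((t.choose j : ℂ) * lam ^ (t - j)) • (N ^ j) v := by
            intro t
            have hfNl : f = N + lam • 1 := by rw [hN]; abel
            rw [hfNl, hcomm.add_pow t]
            rw [LinearMap.sum_apply]
            apply Finset.sum_congr rfl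
            intro j hj
            rw [Module.End.mul_apply, Module.End.mul_apply]
            have h1 : ((t.choose j : ℕ) : Module.End ℂ (Fin n → ℂ)) v = (t.choose j : ℕ) • v :=
              Module.End.natCast_apply _ _
            rw [h1]
            have h2 : (lam • (1 : Module.End ℂ (Fin n → ℂ))) ^ (t - j)
                = lam ^ (t - j) • 1 := by rw [smul_pow, one_pow]
            rw [h2, LinearMap.smul_apply, Module.End.one_apply, ← Nat.cast_smul_eq_nsmul ℂ,
              _root_.map_smul, _root_.map_smul, smul_smul, mul_comm]
          -- eventually the sum is over range k only
          have hbin' : ∀ t, k ≤ t → (f ^ t) v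
              = ∑ j ∈ Finset.range k, ((t.choose j : ℂ) * lam ^ (t - j)) • (N ^ j) v := by
            intro t ht
            rw [hbin t]
            apply (Finset.sum_subset (Finset.range_subset_range.2 (by omega)) ?_).symm
            intro j hj1 hj2
            rw [Finset.mem_range] at hj1 hj2
            rw [hNk j (by omega), smul_zero]
          have hterm : ∀ j, Tendsto
              (fun t : ℕ => ((t.choose j : ℂ) * lam ^ (t - j)) • (N ^ j) v) atTop (𝓝 0) := by
            intro j
            have hgeo : Tendsto (fun t : ℕ => (t.choose j : ℂ) * lam ^ t) atTop (𝓝 0) := by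
              apply Summable.tendsto_atTop_zero
              apply Summable.of_norm
              apply summable_norm_mul_geometric_of_norm_lt_one (k := j)
                (by simpa using hlam : ‖lam‖ < 1)
              apply Asymptotics.isBigO_of_le
              intro t
              simp only [Real.norm_eq_abs, Nat.abs_cast]
              exact_mod_cast Nat.choose_le_pow t j
            have hc : Tendsto (fun t : ℕ => (t.choose j : ℂ) * lam ^ (t - j)) atTop (𝓝 0) := by
              have h3 : Tendsto (fun t : ℕ => ((t.choose j : ℂ) * lam ^ t) * (lam ^ j)⁻¹)
                  atTop (𝓝 0) := by simpa using hgeo.mul_const (lam ^ j)⁻¹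
              apply h3.congr'
              filter_upwards [eventually_ge_atTop j] with t ht
              rw [pow_sub₀ lam hlam0 ht]
              ring
            have := hc.smul_const ((N ^ j) v)
            simpa using this
          have hsum : Tendsto (fun t : ℕ =>
              ∑ j ∈ Finset.range k, ((t.choose j : ℂ) * lam ^ (t - j)) • (N ^ j) v)
              atTop (𝓝 0) := by
            have := tendsto_finset_sum (Finset.range k) (fun j _ => hterm j)
            simpa using this
          apply hsum.congr'
          filter_upwards [eventually_ge_atTop k] with t ht
          exact (hbin' t ht).symm
      have heqf : (fun t : ℕ => (Bc ^ t).mulVec v) = fun t : ℕ => (f ^ t) v :=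
        funext fun t => (hfpow t v).symm
      rw [heqf]
      exact hfv
  -- assembly
  intro x
  have htop := Module.End.iSup_maxGenEigenspace_eq_top f
  set x' : Fin n → ℂ := fun i => (x i : ℂ) with hx'
  have hx'mem : x' ∈ S' ⊔ W' := by
    have h1 : (⨆ mu : ℂ, f.maxGenEigenspace mu) ≤ S' ⊔ W' := iSup_le heig
    have h2 : x' ∈ (⨆ mu : ℂ, f.maxGenEigenspace mu) := by rw [htop]; trivial
    exact h1 h2
  obtain ⟨s, hs, w, hw, hsum⟩ := Submodule.mem_sup.1 hx'mem
  refine ⟨fun i => (s i).re, ?_, ?_⟩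
  · intro p i hi j hj
    show (s i).re = (s j).re
    rw [hs p i hi j hj]
  · have hxy : (x - fun i => (s i).re) = fun i => (w i).re := by
      funext i
      have h3 : s i + w i = (x i : ℂ) := congrFun hsum i
      have hre := congrArg Complex.re h3
      simp only [Complex.add_re, Complex.ofReal_re] at hre
      simp only [Pi.sub_apply]
      linarith
    rw [hxy]
    rw [tendsto_pi_nhds]
    intro i
    have hwW : Tendsto (fun t : ℕ => (Bc ^ t).mulVec w) atTop (𝓝 0) := hw
    have hcoord : Tendsto (fun t : ℕ => ((Bc ^ t).mulVec w) i) atTop (𝓝 0) := by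
      have := tendsto_pi_nhds.1 hwW i
      simpa using this
    have hre : Tendsto (fun t : ℕ => (((Bc ^ t).mulVec w) i).re) atTop (𝓝 0) := by
      have := (Complex.continuous_re.tendsto 0).comp hcoord
      simpa [Function.comp_def] using this
    have heqc : ∀ t : ℕ, (((Bc ^ t).mulVec w) i).re
        = ((A ^ t).mulVec fun l => (w l).re) i := by
      intro t
      simp only [Matrix.mulVec, dotProduct, hBent]
      rw [Complex.re_sum]
      apply Finset.sum_congr rfl
      intro j _
      simp [Complex.mul_re]
    have := hre.congr heqc
    simpa using this


theorem stmt18 {n K : ℕ} (C : Fin K → Finset (Fin n)) (hC : IsClustering C)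
    (A : Matrix (Fin n) (Fin n) ℝ) (hA : IsStochastic A)
    (hdiag : ∀ i, 0 < A i i)
    (hinfl : InterClusterCommonInfluence C A)
    (hspan : HasClusterSpanningTrees C A) :
    ∀ x : Fin n → ℝ, ∃ y ∈ SC C,
      Tendsto (fun t : ℕ => (A ^ t).mulVec (x - y)) atTop (𝓝 0) := by
  rcases Nat.eq_zero_or_pos n with hn | hn
  · subst hn
    intro x
    refine ⟨x, fun p i hi j hj => i.elim0, ?_⟩
    simpa [sub_self, Matrix.mulVec_zero] using
      (tendsto_const_nhds : Tendsto (fun _ : ℕ => (0 : Fin 0 → ℝ)) atTop (𝓝 0))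
  · exact main_complex hn hC hA hdiag hinfl hspan
end Spectral
end
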